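/- STRIPE-X strongly separates encoding from non-encoding explanations: if H(y) and H(y|x) are finite, e is encoding (so φ(e) > 0) and e' is non-encoding (so φ(e') = 0), then for all α > I(y;x)/φ(e), the penalized score STRIPE-X_α(q, e') = EVAL-X(q,e') − αφ(e') strictly exceeds STRIPE-X_α(q, e) = EVAL-X(q,e) − αφ(e). -/

import Mathlib

open scoped Classical

/-- Probability of an event under a probability mass function on a finite space. -/
noncomputable def Pr {Ω : Type*} [Fintype Ω] (p : Ω → ℝ) (E : Ω → Prop) : ℝ :=
  ∑ ω, if E ω then p ω else 0

/-- Conditional probability `P(A | B)`. -/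
noncomputable def cPr {Ω : Type*} [Fintype Ω] (p : Ω → ℝ) (A B : Ω → Prop) : ℝ :=
  Pr p (fun ω => A ω ∧ B ω) / Pr p B

/-- Conditional independence of a (finite-valued) random variable `y` and a binary
variable given by the event `E`, given the conditioning event `C`. -/
def CondIndepBin {Ω Y : Type*} [Fintype Ω] (p : Ω → ℝ) (y : Ω → Y) (E C : Ω → Prop) : Prop :=
  ∀ y₀ : Y,
    cPr p (fun ω => y ω = y₀ ∧ E ω) C
        = cPr p (fun ω => y ω = y₀) C * cPr p E C ∧
    cPr p (fun ω => y ω = y₀ ∧ ¬ E ω) C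
        = cPr p (fun ω => y ω = y₀) C * cPr p (fun ω => ¬ E ω) C

/-- Conditional mutual information `I(E ; y | C)` between the binary variable given by the
event `E` and the finite-valued variable `y`, computed under the conditional distribution
given the event `C`. -/
noncomputable def condMI {Ω Y : Type*} [Fintype Ω] [Fintype Y]
    (p : Ω → ℝ) (y : Ω → Y) (E C : Ω → Prop) : ℝ :=
  ∑ y₀ : Y,
    (cPr p (fun ω => y ω = y₀ ∧ E ω) C *
        Real.log (cPr p (fun ω => y ω = y₀ ∧ E ω) C
          / (cPr p (fun ω => y ω = y₀) C * cPr p E C)) +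
     cPr p (fun ω => y ω = y₀ ∧ ¬ E ω) C *
        Real.log (cPr p (fun ω => y ω = y₀ ∧ ¬ E ω) C
          / (cPr p (fun ω => y ω = y₀) C * cPr p (fun ω => ¬ E ω) C)))

/-- The EVAL-X score of an explanation: expected log-likelihood of the label under the
conditional given the explanation's values. -/
noncomputable def evalX {Ω A Y : Type*} [Fintype Ω] {d : ℕ}
    (p : Ω → ℝ) (x : Ω → Fin d → A) (y : Ω → Y)
    (e : (Fin d → A) → (Fin d → Bool)) : ℝ :=
  ∑ ω, p ω * Real.log (cPr p (fun ω' => y ω' = y ω)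
      (fun ω' => ∀ i, e (x ω) i = true → x ω' i = x ω i))

/-- The ENCODE-METER `φ(e)`: expectation over the explanation distribution of
`I(E_v ; y | x_v = a)`. -/
noncomputable def encodeMeter {Ω A Y : Type*} [Fintype Ω] [Fintype Y] {d : ℕ}
    (p : Ω → ℝ) (x : Ω → Fin d → A) (y : Ω → Y)
    (e : (Fin d → A) → (Fin d → Bool)) : ℝ :=
  ∑ ω, p ω * condMI p y (fun ω' => e (x ω') = e (x ω))
      (fun ω' => ∀ i, e (x ω) i = true → x ω' i = x ω i)

/-- The mutual information `I(y ; x) = E[log (P(y|x)/P(y))]`. -/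
noncomputable def mutInfoYX {Ω A Y : Type*} [Fintype Ω] {d : ℕ}
    (p : Ω → ℝ) (x : Ω → Fin d → A) (y : Ω → Y) : ℝ :=
  ∑ ω, p ω * Real.log (cPr p (fun ω' => y ω' = y ω) (fun ω' => x ω' = x ω)
      / Pr p (fun ω' => y ω' = y ω))

section aux
variable {Ω : Type*} [Fintype Ω] {p : Ω → ℝ}

lemma Pr_congr (p : Ω → ℝ) {A B : Ω → Prop} (h : ∀ ω, A ω ↔ B ω) : Pr p A = Pr p B :=
  Finset.sum_congr rfl fun ω _ => by
    by_cases hA : A ω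
    · rw [if_pos hA, if_pos ((h ω).1 hA)]
    · rw [if_neg hA, if_neg (fun hB => hA ((h ω).2 hB))]

lemma Pr_nonneg (hp : ∀ ω, 0 < p ω) (A : Ω → Prop) : 0 ≤ Pr p A :=
  Finset.sum_nonneg fun ω _ => by by_cases h : A ω <;> simp [h, (hp ω).le]

lemma Pr_pos (hp : ∀ ω, 0 < p ω) {A : Ω → Prop} (ω₀ : Ω) (h : A ω₀) : 0 < Pr p A :=
  Finset.sum_pos' (fun ω _ => by by_cases hA : A ω <;> simp [hA, (hp ω).le])
    ⟨ω₀, Finset.mem_univ _, by simp [h, hp ω₀]⟩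

lemma cPr_nonneg (hp : ∀ ω, 0 < p ω) (A B : Ω → Prop) : 0 ≤ cPr p A B :=
  div_nonneg (Pr_nonneg hp _) (Pr_nonneg hp _)

lemma cPr_pos (hp : ∀ ω, 0 < p ω) {A B : Ω → Prop} (ω₀ : Ω) (hA : A ω₀) (hB : B ω₀) :
    0 < cPr p A B :=
  div_pos (Pr_pos hp ω₀ ⟨hA, hB⟩) (Pr_pos hp ω₀ hB)

lemma sum_Pr_eq {Y : Type*} [Fintype Y] (p : Ω → ℝ) (y : Ω → Y) (B : Ω → Prop) :
    ∑ y₀ : Y, Pr p (fun ω => y ω = y₀ ∧ B ω) = Pr p B := by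
  unfold Pr
  rw [Finset.sum_comm]
  refine Finset.sum_congr rfl fun ω _ => ?_
  by_cases hB : B ω <;> simp [hB]

lemma sum_cPr_eq {Y : Type*} [Fintype Y] (p : Ω → ℝ) (y : Ω → Y) {B : Ω → Prop}
    (hB : Pr p B ≠ 0) :
    ∑ y₀ : Y, cPr p (fun ω => y ω = y₀) B = 1 := by
  unfold cPr
  rw [← Finset.sum_div, sum_Pr_eq p y B, div_self hB]

lemma gibbs (hp : ∀ ω, 0 < p ω) (hsum : ∑ ω, p ω = 1) {f g : Ω → ℝ}
    (hf : ∀ ω, 0 < f ω) (hg : ∀ ω, 0 < g ω)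
    (h : ∑ ω, p ω * (f ω / g ω) ≤ 1) :
    ∑ ω, p ω * Real.log (f ω) ≤ ∑ ω, p ω * Real.log (g ω) := by
  have key : ∑ ω, p ω * (Real.log (f ω) - Real.log (g ω)) ≤ 0 := by
    calc ∑ ω, p ω * (Real.log (f ω) - Real.log (g ω))
        ≤ ∑ ω, p ω * (f ω / g ω - 1) := by
          refine Finset.sum_le_sum fun ω _ => mul_le_mul_of_nonneg_left ?_ (hp ω).le
          rw [← Real.log_div (hf ω).ne' (hg ω).ne']
          exact Real.log_le_sub_one_of_pos (div_pos (hf ω) (hg ω))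
      _ = (∑ ω, p ω * (f ω / g ω)) - 1 := by
          simp [mul_sub, Finset.sum_sub_distrib, hsum]
      _ ≤ 0 := by linarith
  have key2 : ∑ ω, (p ω * Real.log (f ω) - p ω * Real.log (g ω)) ≤ 0 := by
    simpa [mul_sub] using key
  rw [Finset.sum_sub_distrib] at key2
  linarith

lemma sum_div_fiber {W : Type*} [DecidableEq W] (hp : ∀ ω, 0 < p ω) (Z : Ω → W) (t : W → ℝ) :
    ∑ ω, p ω * t (Z ω) / Pr p (fun ω' => Z ω' = Z ω)
      = ∑ w ∈ Finset.univ.image Z, t w := by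
  rw [← Finset.sum_fiberwise_of_maps_to (g := Z)
    (fun ω _ => Finset.mem_image_of_mem Z (Finset.mem_univ ω))]
  refine Finset.sum_congr rfl fun w hw => ?_
  have hNw : Pr p (fun ω' => Z ω' = w)
      = ∑ ω ∈ Finset.univ.filter (fun ω => Z ω = w), p ω := by
    rw [Finset.sum_filter]; unfold Pr
    exact Finset.sum_congr rfl fun ω _ => by congr 1
  have hpos : 0 < Pr p (fun ω' => Z ω' = w) := by
    obtain ⟨ω₀, _, rfl⟩ := Finset.mem_image.mp hw
    exact Pr_pos hp ω₀ rfl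
  calc ∑ ω ∈ Finset.univ.filter (fun ω => Z ω = w),
        p ω * t (Z ω) / Pr p (fun ω' => Z ω' = Z ω)
      = ∑ ω ∈ Finset.univ.filter (fun ω => Z ω = w),
        p ω * (t w / Pr p (fun ω' => Z ω' = w)) := by
        refine Finset.sum_congr rfl fun ω hω => ?_
        have hZ : Z ω = w := (Finset.mem_filter.mp hω).2
        rw [hZ]; ring
    _ = (∑ ω ∈ Finset.univ.filter (fun ω => Z ω = w), p ω)
          * (t w / Pr p (fun ω' => Z ω' = w)) := by
        rw [Finset.sum_mul]
    _ = t w := by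
        rw [← hNw, div_eq_mul_inv, ← mul_assoc, mul_comm (Pr p _), mul_assoc,
          mul_inv_cancel₀ hpos.ne', mul_one]

lemma sum_Pr_fiber {W : Type*} [DecidableEq W] (hp : ∀ ω, 0 < p ω) (hsum : ∑ ω, p ω = 1) (Z : Ω → W) :
    ∑ w ∈ Finset.univ.image Z, Pr p (fun ω' => Z ω' = w) = 1 := by
  rw [← sum_div_fiber hp Z (fun w => Pr p (fun ω' => Z ω' = w)), ← hsum]
  refine Finset.sum_congr rfl fun ω _ => ?_
  have h : 0 < Pr p (fun ω' => Z ω' = Z ω) := Pr_pos hp ω rfl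
  rw [mul_div_assoc, div_self h.ne', mul_one]

end aux

section main
variable {Ω A Y : Type*} [Fintype Ω] [Fintype Y] {d : ℕ}
variable {p : Ω → ℝ}

/-- Upper bound: EVAL-X of any explanation is at most `E[log P(y|x)]`. -/
lemma evalX_le (hp : ∀ ω, 0 < p ω) (hsum : ∑ ω, p ω = 1)
    (x : Ω → Fin d → A) (y : Ω → Y) (e : (Fin d → A) → (Fin d → Bool)) :
    (∑ ω, p ω * Real.log (cPr p (fun ω' => y ω' = y ω)
        (fun ω' => ∀ i, e (x ω) i = true → x ω' i = x ω i)))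
      ≤ ∑ ω, p ω * Real.log (cPr p (fun ω' => y ω' = y ω) (fun ω' => x ω' = x ω)) := by
  classical
  set f : Ω → ℝ := fun ω => cPr p (fun ω' => y ω' = y ω)
      (fun ω' => ∀ i, e (x ω) i = true → x ω' i = x ω i) with hf_def
  set g : Ω → ℝ := fun ω => cPr p (fun ω' => y ω' = y ω) (fun ω' => x ω' = x ω) with hg_def
  have hf : ∀ ω, 0 < f ω := fun ω => cPr_pos hp ω rfl (fun i _ => rfl)
  have hg : ∀ ω, 0 < g ω := fun ω => cPr_pos hp ω rfl rfl
  refine gibbs hp hsum hf hg ?_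
  set Z : Ω → Y × (Fin d → A) := fun ω => (y ω, x ω) with hZ_def
  set t : Y × (Fin d → A) → ℝ := fun z =>
    cPr p (fun ω' => y ω' = z.1) (fun ω' => ∀ i, e z.2 i = true → x ω' i = z.2 i)
      * Pr p (fun ω' => x ω' = z.2) with ht_def
  have hrw : ∀ ω, p ω * (f ω / g ω) = p ω * t (Z ω) / Pr p (fun ω' => Z ω' = Z ω) := by
    intro ω
    have h1 : Pr p (fun ω' => Z ω' = Z ω)
        = Pr p (fun ω' => y ω' = y ω ∧ x ω' = x ω) :=
      Pr_congr p fun ω' => by simp [hZ_def, Prod.ext_iff]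
    have hx : 0 < Pr p (fun ω' => x ω' = x ω) := Pr_pos hp ω rfl
    rw [h1]
    show p ω * (f ω / g ω) = p ω * (f ω * Pr p (fun ω' => x ω' = x ω))
        / Pr p (fun ω' => y ω' = y ω ∧ x ω' = x ω)
    rw [hg_def]
    show p ω * (f ω / (Pr p (fun ω' => (y ω' = y ω) ∧ x ω' = x ω)
        / Pr p (fun ω' => x ω' = x ω))) = _
    rw [div_div_eq_mul_div]
    ring
  calc ∑ ω, p ω * (f ω / g ω) = ∑ ω, p ω * t (Z ω) / Pr p (fun ω' => Z ω' = Z ω) :=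
        Finset.sum_congr rfl fun ω _ => hrw ω
    _ = ∑ w ∈ Finset.univ.image Z, t w := sum_div_fiber hp Z t
    _ ≤ ∑ w ∈ (Finset.univ : Finset Y) ×ˢ Finset.univ.image x, t w := by
        refine Finset.sum_le_sum_of_subset_of_nonneg ?_ (fun w _ _ => ?_)
        · intro w hw
          obtain ⟨ω₀, _, rfl⟩ := Finset.mem_image.mp hw
          exact Finset.mem_product.mpr ⟨Finset.mem_univ _,
            Finset.mem_image_of_mem x (Finset.mem_univ ω₀)⟩
        · exact mul_nonneg (cPr_nonneg hp _ _) (Pr_nonneg hp _)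
    _ = ∑ x₀ ∈ Finset.univ.image x, ∑ y₀ : Y, t (y₀, x₀) := by
        rw [Finset.sum_product]; exact Finset.sum_comm
    _ = ∑ x₀ ∈ Finset.univ.image x, Pr p (fun ω' => x ω' = x₀) := by
        refine Finset.sum_congr rfl fun x₀ hx₀ => ?_
        obtain ⟨ω₀, _, rfl⟩ := Finset.mem_image.mp hx₀
        simp only [ht_def]
        have hC : Pr p (fun ω' => ∀ i, e (x ω₀) i = true → x ω' i = x ω₀ i) ≠ 0 :=
          (Pr_pos hp ω₀ (fun i _ => rfl)).ne'
        rw [← Finset.sum_mul, sum_cPr_eq p y hC, one_mul]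
    _ = 1 := sum_Pr_fiber hp hsum x

/-- For a non-encoding explanation, EVAL-X is at least `E[log P(y)]`. -/
lemma evalX_ge (hp : ∀ ω, 0 < p ω) (hsum : ∑ ω, p ω = 1)
    (x : Ω → Fin d → A) (y : Ω → Y) (e' : (Fin d → A) → (Fin d → Bool))
    (hnon : ∀ ω, CondIndepBin p y (fun ω' => e' (x ω') = e' (x ω))
        (fun ω' => ∀ i, e' (x ω) i = true → x ω' i = x ω i)) :
    (∑ ω, p ω * Real.log (Pr p (fun ω' => y ω' = y ω)))
      ≤ ∑ ω, p ω * Real.log (cPr p (fun ω' => y ω' = y ω)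
          (fun ω' => ∀ i, e' (x ω) i = true → x ω' i = x ω i)) := by
  classical
  set W : Ω → (Fin d → Bool) × (Fin d → Option A) := fun ω =>
    (e' (x ω), fun i => if e' (x ω) i = true then some (x ω i) else none) with hW_def
  have Weq : ∀ ω ω', W ω' = W ω ↔
      (e' (x ω') = e' (x ω) ∧ ∀ i, e' (x ω) i = true → x ω' i = x ω i) := by
    intro ω ω'
    simp only [hW_def, Prod.ext_iff, funext_iff]
    constructor
    · rintro ⟨h1, h2⟩
      refine ⟨h1, fun i hi => ?_⟩
      have h3 := h2 i
      rw [h1, if_pos hi, if_pos hi] at h3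
      exact Option.some.inj h3
    · rintro ⟨h1, h2⟩
      refine ⟨h1, fun i => ?_⟩
      rw [h1]
      by_cases hi : e' (x ω) i = true
      · rw [if_pos hi, if_pos hi, h2 i hi]
      · rw [if_neg hi, if_neg hi]
  -- rewrite the conditional probabilities using conditional independence
  have hcond : ∀ ω, cPr p (fun ω' => y ω' = y ω)
      (fun ω' => ∀ i, e' (x ω) i = true → x ω' i = x ω i)
      = cPr p (fun ω' => y ω' = y ω) (fun ω' => W ω' = W ω) := by
    intro ω
    have hb : (0:ℝ) < Pr p (fun ω' => ∀ i, e' (x ω) i = true → x ω' i = x ω i) :=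
      Pr_pos hp ω (fun i _ => rfl)
    have hc : (0:ℝ) < Pr p (fun ω' =>
        (e' (x ω') = e' (x ω)) ∧ ∀ i, e' (x ω) i = true → x ω' i = x ω i) :=
      Pr_pos hp ω ⟨rfl, fun i _ => rfl⟩
    have heq := (hnon ω (y ω)).1
    simp only [cPr] at heq ⊢
    rw [Pr_congr p (A := fun ω' => y ω' = y ω ∧ W ω' = W ω)
        (B := fun ω' => (y ω' = y ω ∧ e' (x ω') = e' (x ω)) ∧
          ∀ i, e' (x ω) i = true → x ω' i = x ω i)
        (fun ω' => ((and_congr_right fun _ => Weq ω ω').trans and_assoc.symm)),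
      Pr_congr p (A := fun ω' => W ω' = W ω)
        (B := fun ω' => (e' (x ω') = e' (x ω)) ∧
          ∀ i, e' (x ω) i = true → x ω' i = x ω i)
        (fun ω' => Weq ω ω')]
    set n := Pr p (fun ω' => (y ω' = y ω ∧ e' (x ω') = e' (x ω)) ∧
        ∀ i, e' (x ω) i = true → x ω' i = x ω i) with hn_def
    set a := Pr p (fun ω' => y ω' = y ω ∧
        ∀ i, e' (x ω) i = true → x ω' i = x ω i) with ha_def
    set b := Pr p (fun ω' => ∀ i, e' (x ω) i = true → x ω' i = x ω i) with hb_def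
    set c2 := Pr p (fun ω' => (e' (x ω') = e' (x ω)) ∧
        ∀ i, e' (x ω) i = true → x ω' i = x ω i) with hc_def
    have hkey : n * b = a * c2 := by
      have hb' : b ≠ 0 := hb.ne'
      field_simp at heq
      exact mul_right_cancel₀ hb' (by rw [heq])
    rw [div_eq_div_iff hb.ne' hc.ne']
    linarith
  have hrwsum : (∑ ω, p ω * Real.log (cPr p (fun ω' => y ω' = y ω)
      (fun ω' => ∀ i, e' (x ω) i = true → x ω' i = x ω i)))
      = ∑ ω, p ω * Real.log (cPr p (fun ω' => y ω' = y ω) (fun ω' => W ω' = W ω)) :=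
    Finset.sum_congr rfl fun ω _ => by rw [hcond ω]
  rw [hrwsum]
  set f : Ω → ℝ := fun ω => Pr p (fun ω' => y ω' = y ω) with hf_def
  set g : Ω → ℝ := fun ω => cPr p (fun ω' => y ω' = y ω) (fun ω' => W ω' = W ω) with hg_def
  have hf : ∀ ω, 0 < f ω := fun ω => Pr_pos hp ω rfl
  have hg : ∀ ω, 0 < g ω := fun ω => cPr_pos hp ω rfl rfl
  refine gibbs hp hsum hf hg ?_
  set Z : Ω → Y × ((Fin d → Bool) × (Fin d → Option A)) := fun ω => (y ω, W ω) with hZ_def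
  set t : Y × ((Fin d → Bool) × (Fin d → Option A)) → ℝ := fun z =>
    Pr p (fun ω' => y ω' = z.1) * Pr p (fun ω' => W ω' = z.2) with ht_def
  have hrw : ∀ ω, p ω * (f ω / g ω) = p ω * t (Z ω) / Pr p (fun ω' => Z ω' = Z ω) := by
    intro ω
    have h1 : Pr p (fun ω' => Z ω' = Z ω)
        = Pr p (fun ω' => y ω' = y ω ∧ W ω' = W ω) :=
      Pr_congr p fun ω' => by simp [hZ_def, Prod.ext_iff]
    rw [h1]
    show p ω * (f ω / (Pr p (fun ω' => (y ω' = y ω) ∧ W ω' = W ω)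
        / Pr p (fun ω' => W ω' = W ω)))
      = p ω * (f ω * Pr p (fun ω' => W ω' = W ω))
        / Pr p (fun ω' => y ω' = y ω ∧ W ω' = W ω)
    rw [div_div_eq_mul_div]
    ring
  calc ∑ ω, p ω * (f ω / g ω) = ∑ ω, p ω * t (Z ω) / Pr p (fun ω' => Z ω' = Z ω) :=
        Finset.sum_congr rfl fun ω _ => hrw ω
    _ = ∑ w ∈ Finset.univ.image Z, t w := sum_div_fiber hp Z t
    _ ≤ ∑ w ∈ Finset.univ.image y ×ˢ Finset.univ.image W, t w := by
        refine Finset.sum_le_sum_of_subset_of_nonneg ?_ (fun w _ _ => ?_)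
        · intro w hw
          obtain ⟨ω₀, _, rfl⟩ := Finset.mem_image.mp hw
          exact Finset.mem_product.mpr ⟨Finset.mem_image_of_mem y (Finset.mem_univ ω₀),
            Finset.mem_image_of_mem W (Finset.mem_univ ω₀)⟩
        · exact mul_nonneg (Pr_nonneg hp _) (Pr_nonneg hp _)
    _ = (∑ y₀ ∈ Finset.univ.image y, Pr p (fun ω' => y ω' = y₀))
          * (∑ w ∈ Finset.univ.image W, Pr p (fun ω' => W ω' = w)) := by
        rw [Finset.sum_mul_sum, Finset.sum_product]
    _ = 1 := by rw [sum_Pr_fiber hp hsum y, sum_Pr_fiber hp hsum W, mul_one]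

/-- A non-encoding explanation has ENCODE-METER zero. -/
lemma encodeMeter_eq_zero (x : Ω → Fin d → A) (y : Ω → Y)
    (e' : (Fin d → A) → (Fin d → Bool))
    (hnon : ∀ ω, CondIndepBin p y (fun ω' => e' (x ω') = e' (x ω))
        (fun ω' => ∀ i, e' (x ω) i = true → x ω' i = x ω i)) :
    encodeMeter p x y e' = 0 := by
  unfold encodeMeter condMI
  refine Finset.sum_eq_zero fun ω _ => ?_
  rw [mul_eq_zero]; right
  refine Finset.sum_eq_zero fun y₀ _ => ?_
  obtain ⟨h1, h2⟩ := hnon ω y₀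
  have t1 : cPr p (fun ω' => y ω' = y₀ ∧ e' (x ω') = e' (x ω))
      (fun ω' => ∀ i, e' (x ω) i = true → x ω' i = x ω i) *
      Real.log (cPr p (fun ω' => y ω' = y₀ ∧ e' (x ω') = e' (x ω))
        (fun ω' => ∀ i, e' (x ω) i = true → x ω' i = x ω i)
        / (cPr p (fun ω' => y ω' = y₀) (fun ω' => ∀ i, e' (x ω) i = true → x ω' i = x ω i)
          * cPr p (fun ω' => e' (x ω') = e' (x ω))
            (fun ω' => ∀ i, e' (x ω) i = true → x ω' i = x ω i))) = 0 := by
    rcases eq_or_ne (cPr p (fun ω' => y ω' = y₀ ∧ e' (x ω') = e' (x ω))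
      (fun ω' => ∀ i, e' (x ω) i = true → x ω' i = x ω i)) 0 with h | h
    · rw [h, zero_mul]
    · rw [← h1, div_self h, Real.log_one, mul_zero]
  have t2 : cPr p (fun ω' => y ω' = y₀ ∧ ¬ e' (x ω') = e' (x ω))
      (fun ω' => ∀ i, e' (x ω) i = true → x ω' i = x ω i) *
      Real.log (cPr p (fun ω' => y ω' = y₀ ∧ ¬ e' (x ω') = e' (x ω))
        (fun ω' => ∀ i, e' (x ω) i = true → x ω' i = x ω i)
        / (cPr p (fun ω' => y ω' = y₀) (fun ω' => ∀ i, e' (x ω) i = true → x ω' i = x ω i)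
          * cPr p (fun ω' => ¬ e' (x ω') = e' (x ω))
            (fun ω' => ∀ i, e' (x ω) i = true → x ω' i = x ω i))) = 0 := by
    rcases eq_or_ne (cPr p (fun ω' => y ω' = y₀ ∧ ¬ e' (x ω') = e' (x ω))
      (fun ω' => ∀ i, e' (x ω) i = true → x ω' i = x ω i)) 0 with h | h
    · rw [h, zero_mul]
    · rw [← h2, div_self h, Real.log_one, mul_zero]
  rw [t1, t2, add_zero]

end main

/-- STRIPE-X strongly separates encoding from non-encoding explanations: if
`e` is encoding (`φ(e) > 0`) and `e'` is non-encoding, then for every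
`α > I(y;x)/φ(e)` the penalized score of `e'` strictly exceeds that of `e`. -/
theorem stripex_strong_detection
    {Ω A Y : Type*} [Fintype Ω] [Fintype Y] {d : ℕ}
    (p : Ω → ℝ) (hp : ∀ ω, 0 < p ω) (hsum : ∑ ω, p ω = 1)
    (x : Ω → Fin d → A) (y : Ω → Y)
    (e e' : (Fin d → A) → (Fin d → Bool))
    (henc : 0 < encodeMeter p x y e)
    (hnon : ∀ ω, CondIndepBin p y (fun ω' => e' (x ω') = e' (x ω))
        (fun ω' => ∀ i, e' (x ω) i = true → x ω' i = x ω i)) :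
    ∀ α : ℝ, mutInfoYX p x y / encodeMeter p x y e < α →
      evalX p x y e - α * encodeMeter p x y e
        < evalX p x y e' - α * encodeMeter p x y e' := by
  intro α hα
  have hm0 : encodeMeter p x y e' = 0 := encodeMeter_eq_zero x y e' hnon
  have h4 : mutInfoYX p x y < α * encodeMeter p x y e := (div_lt_iff₀ henc).mp hα
  have h1 := evalX_le hp hsum x y e
  have h2 := evalX_ge hp hsum x y e' hnon
  have h3 : mutInfoYX p x y
      = (∑ ω, p ω * Real.log (cPr p (fun ω' => y ω' = y ω) (fun ω' => x ω' = x ω)))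
        - ∑ ω, p ω * Real.log (Pr p (fun ω' => y ω' = y ω)) := by
    unfold mutInfoYX
    rw [← Finset.sum_sub_distrib]
    refine Finset.sum_congr rfl fun ω _ => ?_
    have hgpos : 0 < cPr p (fun ω' => y ω' = y ω) (fun ω' => x ω' = x ω) :=
      cPr_pos hp ω rfl rfl
    have hppos : 0 < Pr p (fun ω' => y ω' = y ω) := Pr_pos hp ω rfl
    rw [Real.log_div hgpos.ne' hppos.ne']
    ring
  rw [hm0, mul_zero, sub_zero]
  unfold evalX
  linarith
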